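/- The bottleneck distance on the set of barcodes is non-degenerate: if two barcodes B and B' satisfy d_bottle(B, B') = 0, then B = B' as multisets of intervals. -/

import Mathlib

open scoped ENNReal

/-- A bar `(a, b]`, where the second component `⊤ : EReal` encodes a
semi-infinite bar `(a, +∞)`. -/
abbrev Bar := ℝ × EReal

namespace Bar

/-- A bar is valid when it describes a non-empty interval. -/
def IsValid (I : Bar) : Prop := (I.1 : EReal) < I.2

/-- The length of a bar. -/
noncomputable def length (I : Bar) : EReal := I.2 - (I.1 : EReal)

/-- The interval `(a, b]` (or `(a, +∞)`) underlying a bar, as a subset of `ℝ`. -/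
def toSet (I : Bar) : Set ℝ := {x | I.1 < x ∧ (x : EReal) ≤ I.2}

/-- The `δ`-thickening `I^{-δ}` of a bar: `(a, b]` becomes `(a - δ, b + δ]`
and `(a, +∞)` becomes `(a - δ, +∞)`. -/
noncomputable def thicken (δ : ℝ) (I : Bar) : Bar := (I.1 - δ, I.2 + (δ : EReal))

/-- The shift of a bar by `c ∈ ℝ`. -/
noncomputable def shift (c : ℝ) (I : Bar) : Bar := (I.1 + c, I.2 + (c : EReal))

/-- A bar is semi-infinite when its right end point is `+∞`. -/
def IsInfinite (I : Bar) : Prop := I.2 = ⊤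

lemma length_shift (c : ℝ) (I : Bar) : (I.shift c).length = I.length := by
  obtain ⟨a, b⟩ := I
  induction b using EReal.rec with
  | bot => simp [shift, length]
  | top => show (⊤ : EReal) - ((a + c : ℝ) : EReal) = ⊤ - (a : EReal); rw [EReal.top_sub_coe, EReal.top_sub_coe]
  | coe b =>
      show ((b : EReal) + (c : EReal)) - ((a + c : ℝ) : EReal) = (b : EReal) - (a : EReal)
      norm_cast
      ring

lemma IsValid.shift {I : Bar} (h : I.IsValid) (c : ℝ) : (I.shift c).IsValid := by
  obtain ⟨a, b⟩ := I
  show ((a + c : ℝ) : EReal) < b + (c : EReal)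
  push_cast
  exact EReal.add_lt_add_right_coe h c

end Bar

/-- A barcode: a multiset of valid bars (encoded by an indexed family), such
that for every `ε > 0` only finitely many bars have length at least `ε`. -/
structure Barcode where
  ι : Type
  bar : ι → Bar
  valid : ∀ i, (bar i).IsValid
  finLong : ∀ ε : ℝ, 0 < ε → {i | (ε : EReal) ≤ (bar i).length}.Finite

namespace Barcode

/-- Equality of barcodes as multisets of bars: there is a bijection between the
index sets commuting with the bars. -/
def Equiv (B B' : Barcode) : Prop :=
  ∃ e : B.ι ≃ B'.ι, ∀ i, B'.bar (e i) = B.bar i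

/-- A `δ`-matching between two barcodes: one deletes, in both barcodes, some
bars of length at most `2δ`, and finds a bijection `φ` between the remaining
bars such that `φ(I) = J` implies `I ⊆ J^{-δ}` and `J ⊆ I^{-δ}`. -/
structure Matching (δ : ℝ) (B B' : Barcode) where
  del : Set B.ι
  del' : Set B'.ι
  del_short : ∀ i ∈ del, (B.bar i).length ≤ ((2 * δ : ℝ) : EReal)
  del'_short : ∀ j ∈ del', (B'.bar j).length ≤ ((2 * δ : ℝ) : EReal)
  φ : ↥(delᶜ) ≃ ↥(del'ᶜ)
  subset : ∀ i : ↥(delᶜ), (B.bar i).toSet ⊆ (Bar.thicken δ (B'.bar (φ i))).toSet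
  subset' : ∀ i : ↥(delᶜ), (B'.bar (φ i)).toSet ⊆ (Bar.thicken δ (B.bar i)).toSet

/-- The bottleneck distance between two barcodes (`⊤` if no matching exists). -/
noncomputable def dBottle (B B' : Barcode) : ℝ≥0∞ :=
  sInf (ENNReal.ofReal '' {δ : ℝ | 0 ≤ δ ∧ Nonempty (Matching δ B B')})

/-- The shift of a barcode by `c ∈ ℝ`, denoted `B[c]`. -/
noncomputable def shift (c : ℝ) (B : Barcode) : Barcode where
  ι := B.ι
  bar i := (B.bar i).shift c
  valid i := (B.valid i).shift c
  finLong ε hε := by simpa [Bar.length_shift] using B.finLong ε hε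

/-- `σ^∞(B)`: the number of semi-infinite bars of `B`. -/
noncomputable def sigmaInf (B : Barcode) : ℕ :=
  Nat.card {i : B.ι // (B.bar i).IsInfinite}

/-- The quotient pseudo-distance on the space `𝓑̂` of barcodes modulo overall
shift: `δ([B], [B']) = inf_c d_bottle(B, B'[c])`. -/
noncomputable def dHat (B B' : Barcode) : ℝ≥0∞ :=
  ⨅ c : ℝ, dBottle B (B'.shift c)

end Barcode

namespace BottleneckAux

open Bar

/-- `Near δ v J` : the endpoints of `J` are within `δ` of those of `v`. -/
def Near (δ : ℝ) (v J : Bar) : Prop :=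
  v.1 - δ ≤ J.1 ∧ J.1 ≤ v.1 + δ ∧ v.2 ≤ J.2 + (δ : EReal) ∧ J.2 ≤ v.2 + (δ : EReal)

lemma near_mono {δ δ' : ℝ} (h : δ ≤ δ') {v J : Bar} (hN : Near δ v J) : Near δ' v J := by
  obtain ⟨h1, h2, h3, h4⟩ := hN
  have hc : (δ : EReal) ≤ (δ' : EReal) := by exact_mod_cast h
  exact ⟨by linarith, by linarith, h3.trans (add_le_add le_rfl hc),
    h4.trans (add_le_add le_rfl hc)⟩

lemma ereal_le_of_forall_add {x y : EReal} (h : ∀ δ : ℝ, 0 < δ → x ≤ y + (δ : EReal)) :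
    x ≤ y := by
  induction y using EReal.rec with
  | top => exact le_top
  | bot => simpa using h 1 one_pos
  | coe c =>
    induction x using EReal.rec with
    | bot => exact bot_le
    | top =>
      have h1 := h 1 one_pos
      rw [show (c : EReal) + ((1 : ℝ) : EReal) = ((c + 1 : ℝ) : EReal) by norm_cast] at h1
      exact absurd (top_le_iff.mp h1) (EReal.coe_ne_top _)
    | coe a =>
      norm_cast
      refine le_of_forall_pos_le_add fun ε hε => ?_
      have := h ε hε
      exact_mod_cast this

lemma near_zero {v J : Bar} (h : ∀ δ : ℝ, 0 < δ → Near δ v J) : J = v := by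
  have h1 : J.1 = v.1 := by
    have ha : J.1 ≤ v.1 := le_of_forall_pos_le_add fun ε hε => (h ε hε).2.1
    have hb : v.1 ≤ J.1 := le_of_forall_pos_le_add fun ε hε => by
      have := (h ε hε).1; linarith
    exact le_antisymm ha hb
  have h2 : J.2 = v.2 := by
    have ha : J.2 ≤ v.2 := ereal_le_of_forall_add fun δ hδ => (h δ hδ).2.2.2
    have hb : v.2 ≤ J.2 := ereal_le_of_forall_add fun δ hδ => (h δ hδ).2.2.1
    exact le_antisymm ha hb
  exact Prod.ext h1 h2

lemma toSet_exists_lt {I : Bar} (hI : I.IsValid) {c : ℝ} (hc : I.1 < c) :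
    ∃ x, x ∈ I.toSet ∧ x < c := by
  obtain ⟨a, b⟩ := I
  simp only [Bar.IsValid] at hI
  induction b using EReal.rec with
  | bot => exact absurd hI (by simp)
  | top =>
    exact ⟨(a + c) / 2, ⟨by simpa using by linarith, le_top⟩, by simpa using by linarith⟩
  | coe b =>
    have hab : a < b := by exact_mod_cast hI
    refine ⟨min ((a + c) / 2) b, ⟨lt_min (by linarith) hab, ?_⟩, ?_⟩
    · show ((min ((a + c) / 2) b : ℝ) : EReal) ≤ (b : EReal)
      exact_mod_cast min_le_right _ _
    · exact lt_of_le_of_lt (min_le_left _ _) (by linarith)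

lemma incl_bounds {δ : ℝ} {I J : Bar} (hI : I.IsValid)
    (h : I.toSet ⊆ (Bar.thicken δ J).toSet) :
    J.1 - δ ≤ I.1 ∧ I.2 ≤ J.2 + (δ : EReal) := by
  obtain ⟨a', b'⟩ := J
  constructor
  · by_contra hxy
    push_neg at hxy
    obtain ⟨x, hx, hxc⟩ := toSet_exists_lt hI hxy
    have := (h hx).1
    simp only [Bar.thicken] at this
    linarith
  · obtain ⟨a, b⟩ := I
    simp only [Bar.IsValid] at hI
    induction b using EReal.rec with
    | bot => exact absurd hI (by simp)
    | coe b =>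
      have hab : a < b := by exact_mod_cast hI
      have hb : b ∈ Bar.toSet (a, (b : EReal)) := ⟨hab, le_refl _⟩
      exact (h hb).2
    | top =>
      show (⊤ : EReal) ≤ (a', b').2 + (δ : EReal)
      induction b' using EReal.rec with
      | top => show (⊤ : EReal) ≤ ⊤ + (δ : EReal); rw [EReal.top_add_coe]
      | bot =>
        have hx : (a + 1) ∈ Bar.toSet (a, (⊤ : EReal)) := ⟨by linarith, le_top⟩
        have h2 := (h hx).2
        simp only [Bar.thicken, EReal.bot_add] at h2
        exact absurd (le_bot_iff.mp h2) (EReal.coe_ne_bot _)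
      | coe c =>
        have hx : (max (a + 1) (c + δ + 1)) ∈ Bar.toSet (a, (⊤ : EReal)) :=
          ⟨lt_of_lt_of_le (by linarith) (le_max_left _ _), le_top⟩
        have h2 := (h hx).2
        simp only [Bar.thicken] at h2
        rw [show (c : EReal) + (δ : EReal) = ((c + δ : ℝ) : EReal) by norm_cast] at h2
        have h3 : max (a + 1) (c + δ + 1) ≤ c + δ := by exact_mod_cast h2
        have h4 := le_max_right (a + 1) (c + δ + 1)
        linarith

lemma near_of_close {δ : ℝ} {I J : Bar} (hI : I.IsValid) (hJ : J.IsValid)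
    (h1 : I.toSet ⊆ (Bar.thicken δ J).toSet) (h2 : J.toSet ⊆ (Bar.thicken δ I).toSet) :
    Near δ I J := by
  obtain ⟨b1, b2⟩ := incl_bounds hI h1
  obtain ⟨b3, b4⟩ := incl_bounds hJ h2
  exact ⟨by linarith, by linarith, b2, b4⟩

lemma length_bound {δ ℓ : ℝ} {v J : Bar} (hℓ : (ℓ : EReal) ≤ v.length)
    (hN : Near δ v J) : ((ℓ - 2 * δ : ℝ) : EReal) ≤ J.length := by
  obtain ⟨a, b⟩ := v
  obtain ⟨a', b'⟩ := J
  obtain ⟨hn1, hn2, hn3, hn4⟩ := hN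
  dsimp only at hn1 hn2 hn3 hn4
  simp only [Bar.length] at hℓ ⊢
  induction b using EReal.rec with
  | bot =>
    rw [EReal.bot_sub] at hℓ
    exact absurd (le_bot_iff.mp hℓ) (EReal.coe_ne_bot ℓ)
  | top =>
    induction b' using EReal.rec with
    | top => rw [EReal.top_sub_coe]; exact le_top
    | bot => simp only [EReal.bot_add] at hn3; simp at hn3
    | coe c =>
      rw [show (c : EReal) + (δ : EReal) = ((c + δ : ℝ) : EReal) by norm_cast] at hn3
      exact absurd (top_le_iff.mp hn3) (EReal.coe_ne_top _)
  | coe b =>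
    rw [show (b : EReal) - (a : EReal) = ((b - a : ℝ) : EReal) from (EReal.coe_sub b a).symm]
      at hℓ
    have hba : ℓ ≤ b - a := by exact_mod_cast hℓ
    induction b' using EReal.rec with
    | top => rw [EReal.top_sub_coe]; exact le_top
    | bot =>
      simp only [EReal.bot_add] at hn3
      exact absurd (le_bot_iff.mp hn3) (EReal.coe_ne_bot b)
    | coe c =>
      rw [show (c : EReal) + (δ : EReal) = ((c + δ : ℝ) : EReal) by norm_cast] at hn3
      have hbc : b ≤ c + δ := by exact_mod_cast hn3
      rw [show (c : EReal) - (a' : EReal) = ((c - a' : ℝ) : EReal) from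
        (EReal.coe_sub c a').symm]
      exact EReal.coe_le_coe_iff.mpr (by linarith)

lemma exists_pos_le_length {v : Bar} (hv : v.IsValid) :
    ∃ ℓ : ℝ, 0 < ℓ ∧ (ℓ : EReal) ≤ v.length := by
  obtain ⟨a, b⟩ := v
  simp only [Bar.IsValid] at hv
  induction b using EReal.rec with
  | bot => exact absurd hv (by simp)
  | top => exact ⟨1, one_pos, by rw [Bar.length]; simp [EReal.top_sub_coe]⟩
  | coe b =>
    have hab : a < b := by exact_mod_cast hv
    refine ⟨b - a, by linarith, ?_⟩
    rw [Bar.length]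
    rw [show (b : EReal) - (a : EReal) = ((b - a : ℝ) : EReal) from (EReal.coe_sub b a).symm]

/-- The symmetric matching. -/
def matchingSymm {δ : ℝ} {B B' : Barcode} (M : Barcode.Matching δ B B') :
    Barcode.Matching δ B' B where
  del := M.del'
  del' := M.del
  del_short := M.del'_short
  del'_short := M.del_short
  φ := M.φ.symm
  subset := fun j => by
    have h := M.subset' (M.φ.symm j)
    simpa only [Equiv.apply_symm_apply] using h
  subset' := fun j => by
    have h := M.subset (M.φ.symm j)
    simpa only [Equiv.apply_symm_apply] using h

lemma exists_small_matching {B B' : Barcode} (h : Barcode.dBottle B B' = 0) :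
    ∀ ε : ℝ, 0 < ε → ∃ δ : ℝ, 0 ≤ δ ∧ δ < ε ∧ Nonempty (Barcode.Matching δ B B') := by
  intro ε hε
  rw [Barcode.dBottle] at h
  have h2 : sInf (ENNReal.ofReal '' {δ : ℝ | 0 ≤ δ ∧ Nonempty (Barcode.Matching δ B B')})
      < ENNReal.ofReal ε := by
    rw [h]; exact ENNReal.ofReal_pos.mpr hε
  obtain ⟨x, ⟨δ, hδ, hx⟩, hlt⟩ := sInf_lt_iff.mp h2
  refine ⟨δ, hδ.1, ?_, hδ.2⟩
  rw [← hx] at hlt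
  exact (ENNReal.ofReal_lt_ofReal_iff_of_nonneg hδ.1).mp hlt

lemma exists_min_pos {ι : Type} {T : Set ι} (hT : T.Finite) (f : ι → ℝ)
    (hf : ∀ j ∈ T, 0 < f j) (δ0 : ℝ) (hδ0 : 0 < δ0) :
    ∃ d : ℝ, 0 < d ∧ d ≤ δ0 ∧ ∀ j ∈ T, d ≤ f j := by
  classical
  set s : Finset ℝ := insert δ0 (hT.toFinset.image f) with hs
  have hsne : s.Nonempty := ⟨δ0, Finset.mem_insert_self _ _⟩
  refine ⟨s.min' hsne, ?_, ?_, ?_⟩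
  · rw [Finset.lt_min'_iff]
    intro b hb
    rw [hs, Finset.mem_insert] at hb
    rcases hb with rfl | hb
    · exact hδ0
    · obtain ⟨j, hj, rfl⟩ := Finset.mem_image.mp hb
      exact hf j (hT.mem_toFinset.mp hj)
  · exact Finset.min'_le _ _ (Finset.mem_insert_self _ _)
  · intro j hj
    exact Finset.min'_le _ _ (Finset.mem_insert_of_mem
      (Finset.mem_image.mpr ⟨j, hT.mem_toFinset.mpr hj, rfl⟩))

lemma fiber_card_le {B B' : Barcode}
    (h : ∀ ε : ℝ, 0 < ε → ∃ δ : ℝ, 0 ≤ δ ∧ δ < ε ∧ Nonempty (Barcode.Matching δ B B'))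
    (v : Bar) (hv : v.IsValid) :
    Nat.card {i // B.bar i = v} ≤ Nat.card {j // B'.bar j = v} := by
  classical
  obtain ⟨ℓ, hℓ0, hℓ⟩ := exists_pos_le_length hv
  set δ0 : ℝ := ℓ / 4 with hδ0def
  have hδ0pos : 0 < δ0 := by positivity
  -- bars of B' that are δ0-near to v form a finite set
  have hSfin : {j | Near δ0 v (B'.bar j)}.Finite := by
    apply (B'.finLong (ℓ / 2) (by positivity)).subset
    intro j hj
    have hlb := length_bound hℓ hj
    refine le_trans ?_ hlb
    have : (ℓ / 2 : ℝ) ≤ ℓ - 2 * δ0 := by rw [hδ0def]; linarith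
    exact_mod_cast this
  have hfin' : {j | B'.bar j = v}.Finite := by
    apply (B'.finLong ℓ hℓ0).subset
    intro j hj
    simp only [Set.mem_setOf_eq] at hj ⊢
    rw [hj]; exact hℓ
  set T : Set B'.ι := {j | Near δ0 v (B'.bar j)} \ {j | B'.bar j = v} with hTdef
  have hTfin : T.Finite := hSfin.diff
  have hchoice : ∀ j ∈ T, ∃ d : ℝ, 0 < d ∧ ¬ Near d v (B'.bar j) := by
    intro j hj
    by_contra hcon
    push_neg at hcon
    exact hj.2 (near_zero fun d hd => hcon d hd)
  set f : B'.ι → ℝ := fun j =>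
    if hx : ∃ d : ℝ, 0 < d ∧ ¬ Near d v (B'.bar j) then hx.choose else 1 with hfdef
  have hfprop : ∀ j ∈ T, 0 < f j ∧ ¬ Near (f j) v (B'.bar j) := by
    intro j hj
    have hx := hchoice j hj
    simp only [hfdef, dif_pos hx]
    exact hx.choose_spec
  obtain ⟨d, hd0, hdδ0, hdle⟩ := exists_min_pos hTfin f (fun j hj => (hfprop j hj).1) δ0 hδ0pos
  obtain ⟨δ, hδnn, hδlt, ⟨M⟩⟩ := h d hd0
  -- fiber bars are not deleted
  have hsub : ∀ i, B.bar i = v → i ∈ M.delᶜ := by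
    intro i hi hdel
    have hshort := M.del_short i hdel
    rw [hi] at hshort
    have h2δ : ((2 * δ : ℝ) : EReal) < (ℓ : EReal) := by
      have : 2 * δ < ℓ := by rw [hδ0def] at hdδ0; linarith
      exact_mod_cast this
    exact absurd hshort (h2δ.trans_le hℓ).not_ge
  -- the injection
  have htarget : ∀ (i : B.ι) (hi : i ∈ M.delᶜ), B.bar i = v →
      B'.bar ((M.φ ⟨i, hi⟩ : ↥(M.del'ᶜ)) : B'.ι) = v := by
    intro i hi hbi
    set j : B'.ι := ((M.φ ⟨i, hi⟩ : ↥(M.del'ᶜ)) : B'.ι) with hjdef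
    have hN : Near δ v (B'.bar j) := by
      have := near_of_close (B.valid i) (B'.valid j) (M.subset ⟨i, hi⟩) (M.subset' ⟨i, hi⟩)
      rwa [hbi] at this
    have hjS : j ∈ {j | Near δ0 v (B'.bar j)} := near_mono (by linarith) hN
    by_contra hne
    have hjT : j ∈ T := ⟨hjS, hne⟩
    have := (hfprop j hjT).2
    exact this (near_mono (le_trans hδlt.le (hdle j hjT)) hN)
  have hFin : Finite {j // B'.bar j = v} := hfin'.to_subtype
  let F : {i // B.bar i = v} → {j // B'.bar j = v} := fun x =>
    ⟨((M.φ ⟨x.1, hsub x.1 x.2⟩ : ↥(M.del'ᶜ)) : B'.ι), htarget x.1 (hsub x.1 x.2) x.2⟩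
  have hFinj : Function.Injective F := by
    intro x y hxy
    have h1 := Subtype.ext_iff.mp hxy
    have h2 := M.φ.injective (Subtype.ext h1)
    have h3 := Subtype.ext_iff.mp h2
    exact Subtype.ext h3
  exact Nat.card_le_card_of_injective F hFinj

lemma fiber_finite (B : Barcode) (v : Bar) : Finite {i // B.bar i = v} := by
  by_cases hv : v.IsValid
  · obtain ⟨ℓ, hℓ0, hℓ⟩ := exists_pos_le_length hv
    have hfin : {i | B.bar i = v}.Finite := by
      apply (B.finLong ℓ hℓ0).subset
      intro i hi
      simp only [Set.mem_setOf_eq] at hi ⊢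
      rw [hi]; exact hℓ
    exact hfin.to_subtype
  · have : IsEmpty {i // B.bar i = v} := ⟨fun x => hv (x.2 ▸ B.valid x.1)⟩
    infer_instance

end BottleneckAux

/-- The bottleneck distance is non-degenerate: two barcodes at
bottleneck distance `0` are equal as multisets of intervals. -/
theorem bottleneck_nondegenerate (B B' : Barcode)
    (h : Barcode.dBottle B B' = 0) : Barcode.Equiv B B' := by
  classical
  open BottleneckAux in
  have hm := exists_small_matching h
  have hm' : ∀ ε : ℝ, 0 < ε → ∃ δ : ℝ, 0 ≤ δ ∧ δ < ε ∧ Nonempty (Barcode.Matching δ B' B) := by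
    intro ε hε
    obtain ⟨δ, h1, h2, ⟨M⟩⟩ := hm ε hε
    exact ⟨δ, h1, h2, ⟨matchingSymm M⟩⟩
  have hcard : ∀ v : Bar, Nat.card {i // B.bar i = v} = Nat.card {j // B'.bar j = v} := by
    intro v
    by_cases hv : v.IsValid
    · exact le_antisymm (fiber_card_le hm v hv) (fiber_card_le hm' v hv)
    · have e1 : IsEmpty {i // B.bar i = v} := ⟨fun x => hv (x.2 ▸ B.valid x.1)⟩
      have e2 : IsEmpty {j // B'.bar j = v} := ⟨fun x => hv (x.2 ▸ B'.valid x.1)⟩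
      simp [Nat.card_of_isEmpty]
  have hequiv : ∀ v : Bar, Nonempty ({i // B.bar i = v} ≃ {j // B'.bar j = v}) := by
    intro v
    have h1 := fiber_finite B v
    have h2 := fiber_finite B' v
    have := Fintype.ofFinite {i // B.bar i = v}
    have := Fintype.ofFinite {j // B'.bar j = v}
    exact ⟨Fintype.equivOfCardEq (by
      simpa [← Nat.card_eq_fintype_card] using hcard v)⟩
  let g : ∀ v : Bar, {i // B.bar i = v} ≃ {j // B'.bar j = v} := fun v => (hequiv v).some
  refine ⟨((Equiv.sigmaFiberEquiv B.bar).symm.trans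
    (Equiv.sigmaCongrRight g)).trans (Equiv.sigmaFiberEquiv B'.bar), fun i => ?_⟩
  exact (g (B.bar i) ⟨i, rfl⟩).2
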